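/- arXiv:2001.04972 — 2 statements merged into one kernel-verified Lean document; each statement's English description precedes it below -/
import Mathlib

section
/- For x > 0 and 0 < a < 1, one has (x/(x+a))^(1-a) ≤ Γ(x+a)/(x^a · Γ(x)) ≤ 1 (Wendel's inequality for ratios of gamma functions). -/
open Real

/-- Wendel's inequality for ratios of gamma functions. -/
theorem wendel_inequality (x a : ℝ) (hx : 0 < x) (ha0 : 0 < a) (ha1 : a < 1) :
    (x / (x + a)) ^ (1 - a) ≤ Real.Gamma (x + a) / (x ^ a * Real.Gamma x) ∧
    Real.Gamma (x + a) / (x ^ a * Real.Gamma x) ≤ 1 := by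
  have hΓx : 0 < Real.Gamma x := Real.Gamma_pos_of_pos hx
  have hxa : 0 < x + a := by linarith
  have hΓxa : 0 < Real.Gamma (x + a) := Real.Gamma_pos_of_pos hxa
  have hxa1 : 0 < x + a + 1 := by linarith
  constructor
  · -- lower bound: Γ(x+1) ≤ Γ(x+a)^a * Γ(x+a+1)^(1-a)
    have key := Real.Gamma_mul_add_mul_le_rpow_Gamma_mul_rpow_Gamma hxa hxa1 ha0
      (by linarith : (0:ℝ) < 1 - a) (by ring)
    have harg : a * (x + a) + (1 - a) * (x + a + 1) = x + 1 := by ring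
    rw [harg, Real.Gamma_add_one hx.ne', Real.Gamma_add_one hxa.ne'] at key
    -- Γ(x+a+1) = (x+a) Γ(x+a)
    have h1 : ((x + a) * Real.Gamma (x + a)) ^ (1 - a)
        = (x + a) ^ (1 - a) * Real.Gamma (x + a) ^ (1 - a) :=
      Real.mul_rpow hxa.le hΓxa.le
    rw [h1] at key
    have h2 : Real.Gamma (x + a) ^ a * ((x + a) ^ (1 - a) * Real.Gamma (x + a) ^ (1 - a))
        = (x + a) ^ (1 - a) * Real.Gamma (x + a) := by
      rw [mul_comm (Real.Gamma (x+a) ^ a), mul_assoc, ← Real.rpow_add hΓxa]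
      norm_num
    rw [h2] at key
    -- key : x * Γ x ≤ (x+a)^(1-a) * Γ(x+a)
    rw [Real.div_rpow hx.le hxa.le, div_le_div_iff₀ (Real.rpow_pos_of_pos hxa _)
      (by positivity)]
    calc x ^ (1 - a) * (x ^ a * Real.Gamma x)
        = x * Real.Gamma x := by
          rw [← mul_assoc, ← Real.rpow_add hx]; norm_num
      _ ≤ (x + a) ^ (1 - a) * Real.Gamma (x + a) := key
      _ = Real.Gamma (x + a) * (x + a) ^ (1 - a) := mul_comm _ _
  · -- upper bound: Γ(x+a) ≤ Γ(x)^(1-a) Γ(x+1)^a = x^a Γ(x)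
    have key := Real.Gamma_mul_add_mul_le_rpow_Gamma_mul_rpow_Gamma hx
      (by linarith : (0:ℝ) < x + 1) (by linarith : (0:ℝ) < 1 - a) ha0 (by ring)
    have harg : (1 - a) * x + a * (x + 1) = x + a := by ring
    rw [harg, Real.Gamma_add_one hx.ne'] at key
    have h1 : (x * Real.Gamma x) ^ a = x ^ a * Real.Gamma x ^ a :=
      Real.mul_rpow hx.le hΓx.le
    rw [h1] at key
    have h2 : Real.Gamma x ^ (1 - a) * (x ^ a * Real.Gamma x ^ a)
        = x ^ a * Real.Gamma x := by
      rw [mul_comm (Real.Gamma x ^ (1-a)), mul_assoc, ← Real.rpow_add hΓx]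
      norm_num
    rw [h2] at key
    rw [div_le_one (by positivity)]
    simpa using key
end

section
/- Let 0 < α < 2 and let T_d = Γ(d/2)/(2^α · Γ(1+α/2) · Γ(d/2+α/2)). Then for all positive integers d, 2^(-α/2)/Γ(1+α/2) · d^(-α/2) ≤ T_d ≤ 2^(-α/2)/Γ(1+α/2) · d^(-α/2) + 2^(-α/2)·α^(1-α/2)/Γ(1+α/2) · d^(-1). -/
open Real

lemma real_rpow_add_le_add_rpow {a b p : ℝ} (ha : 0 ≤ a) (hb : 0 ≤ b) (hp : 0 ≤ p)
    (hp1 : p ≤ 1) : (a + b) ^ p ≤ a ^ p + b ^ p := by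
  have h := NNReal.rpow_add_le_add_rpow a.toNNReal b.toNNReal hp hp1
  have h2 := NNReal.coe_le_coe.2 h
  push_cast [NNReal.coe_rpow] at h2
  rwa [Real.coe_toNNReal a ha, Real.coe_toNNReal b hb] at h2

lemma wendel_aux {x s : ℝ} (hx : 0 < x) (hs : 0 < s) (hs1 : s < 1) :
    Real.Gamma (x + s) ≤ x ^ s * Real.Gamma x := by
  have h := Real.Gamma_mul_add_mul_le_rpow_Gamma_mul_rpow_Gamma (s := x) (t := x + 1)
    hx (by linarith) (a := 1 - s) (b := s) (by linarith) hs (by ring)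
  have e : (1 - s) * x + s * (x + 1) = x + s := by ring
  rw [e, Real.Gamma_add_one hx.ne'] at h
  have hΓ : 0 < Real.Gamma x := Real.Gamma_pos_of_pos hx
  calc Real.Gamma (x + s) ≤ Real.Gamma x ^ (1 - s) * (x * Real.Gamma x) ^ s := h
    _ = x ^ s * Real.Gamma x := by
        rw [Real.mul_rpow hx.le hΓ.le, ← mul_assoc, mul_comm (Real.Gamma x ^ (1 - s)),
          mul_assoc, ← Real.rpow_add hΓ]
        norm_num

/-- Two-sided bound for the sup norm of the torsion function of the symmetric α-stable
process on the d-dimensional unit ball. -/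
theorem stable_ball_torsion_two_sided (α : ℝ) (hα0 : 0 < α) (hα2 : α < 2) (d : ℕ) (hd : 1 ≤ d) :
    2 ^ (-α / 2) / Real.Gamma (1 + α / 2) * (d : ℝ) ^ (-α / 2) ≤
      Real.Gamma (d / 2) / (2 ^ α * Real.Gamma (1 + α / 2) * Real.Gamma (d / 2 + α / 2)) ∧
    Real.Gamma (d / 2) / (2 ^ α * Real.Gamma (1 + α / 2) * Real.Gamma (d / 2 + α / 2)) ≤
      2 ^ (-α / 2) / Real.Gamma (1 + α / 2) * (d : ℝ) ^ (-α / 2) +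
      2 ^ (-α / 2) * α ^ (1 - α / 2) / Real.Gamma (1 + α / 2) * (d : ℝ) ^ (-1 : ℝ) := by
  set s : ℝ := α / 2 with hs_def
  have hs : 0 < s := by positivity
  have hs1 : s < 1 := by rw [hs_def]; linarith
  have hdpos : (0 : ℝ) < d := by exact_mod_cast hd
  have hx : (0 : ℝ) < d / 2 := by positivity
  have hΓG : 0 < Real.Gamma (1 + α / 2) := Real.Gamma_pos_of_pos (by positivity)
  have hΓx : 0 < Real.Gamma (d / 2) := Real.Gamma_pos_of_pos hx
  have hΓxs : 0 < Real.Gamma ((d : ℝ) / 2 + α / 2) := Real.Gamma_pos_of_pos (by positivity)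
  have hds : (0:ℝ) < (d:ℝ) ^ s := Real.rpow_pos_of_pos hdpos s
  have h2s : (0:ℝ) < (2:ℝ) ^ s := Real.rpow_pos_of_pos two_pos s
  have e2α : (2:ℝ) ^ α = 2 ^ s * 2 ^ s := by
    rw [← Real.rpow_add two_pos, hs_def]; norm_num
  have ens : (2:ℝ) ^ (-α / 2) = ((2:ℝ) ^ s)⁻¹ := by
    rw [hs_def, neg_div, ← Real.rpow_neg (by norm_num : (0:ℝ) ≤ 2)]
  have end' : ((d:ℝ)) ^ (-α / 2) = ((d:ℝ) ^ s)⁻¹ := by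
    rw [hs_def, neg_div, ← Real.rpow_neg hdpos.le]
  have exs : ((d : ℝ) / 2) ^ s = (d:ℝ) ^ s / (2:ℝ) ^ s := Real.div_rpow hdpos.le (by norm_num : (0:ℝ) ≤ 2) s
  have hW1 : Real.Gamma ((d : ℝ) / 2 + α / 2) ≤ (d:ℝ) ^ s / (2:ℝ) ^ s * Real.Gamma (d / 2) := by
    rw [← exs]; exact wendel_aux hx hs hs1
  have hpos : (0:ℝ) < 2 ^ s * 2 ^ s * Real.Gamma (1 + α / 2) * Real.Gamma ((d:ℝ)/2 + α/2) := by
    positivity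
  constructor
  · -- lower bound
    rw [ens, end', e2α, div_mul_eq_mul_div, div_le_div_iff₀ (by positivity) hpos]
    have key : (2:ℝ) ^ s * Real.Gamma ((d:ℝ)/2 + α/2) * ((d:ℝ)^s)⁻¹ ≤ Real.Gamma (d/2) := by
      have h1 : (2:ℝ) ^ s * Real.Gamma ((d:ℝ)/2 + α/2) * ((d:ℝ)^s)⁻¹ ≤
          (2:ℝ) ^ s * ((d:ℝ)^s / (2:ℝ)^s * Real.Gamma (d/2)) * ((d:ℝ)^s)⁻¹ := by
        have := mul_le_mul_of_nonneg_left hW1 h2s.le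
        exact mul_le_mul_of_nonneg_right this (by positivity)
      have h2 : (2:ℝ) ^ s * ((d:ℝ)^s / (2:ℝ)^s * Real.Gamma (d/2)) * ((d:ℝ)^s)⁻¹ =
          Real.Gamma (d/2) := by
        field_simp
      linarith
    calc ((2:ℝ)^s)⁻¹ * ((d:ℝ)^s)⁻¹ * (2^s * 2^s * Real.Gamma (1+α/2) *
          Real.Gamma ((d:ℝ)/2 + α/2))
        = (2:ℝ)^s * Real.Gamma ((d:ℝ)/2+α/2) * ((d:ℝ)^s)⁻¹ * Real.Gamma (1+α/2) := by
          field_simp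
      _ ≤ Real.Gamma (d/2) * Real.Gamma (1+α/2) :=
          mul_le_mul_of_nonneg_right key hΓG.le
  · -- upper bound
    have hW2 : (d / 2 : ℝ) * Real.Gamma (d / 2) ≤ ((d : ℝ) / 2 + s) ^ (1 - s) *
        Real.Gamma ((d:ℝ) / 2 + α / 2) := by
      have h := wendel_aux (x := (d:ℝ) / 2 + s) (s := 1 - s) (by positivity) (by linarith)
        (by linarith)
      have e : ((d:ℝ) / 2) + s + (1 - s) = (d:ℝ) / 2 + 1 := by ring
      rw [e, Real.Gamma_add_one hx.ne'] at h
      exact h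
    have hsub : ((d:ℝ) + α) ^ (1 - s) ≤ (d:ℝ) ^ (1 - s) + α ^ (1 - s) :=
      real_rpow_add_le_add_rpow hdpos.le hα0.le (by linarith) (by linarith)
    have exs2 : ((d : ℝ) / 2 + s) ^ (1 - s) = ((d:ℝ) + α) ^ (1-s) / (2:ℝ) ^ (1-s) := by
      rw [← Real.div_rpow (by positivity) (by norm_num)]
      congr 1
      rw [hs_def]; ring
    have ed1s : (d:ℝ) ^ (1 - s) = (d:ℝ) * ((d:ℝ)^s)⁻¹ := by
      rw [Real.rpow_sub hdpos, Real.rpow_one, div_eq_mul_inv]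
    have h21s : (0:ℝ) < (2:ℝ) ^ (1 - s) := Real.rpow_pos_of_pos two_pos _
    have h2e : (2:ℝ) ^ (1 - s) * (2:ℝ) ^ s = 2 := by
      rw [← Real.rpow_add two_pos]; norm_num
    -- key : Γ(d/2) * d ≤ (d * (d^s)⁻¹ + α^(1-s)) * 2^s * Γ(d/2+α/2)
    have key : Real.Gamma (d/2) * (d:ℝ) ≤
        ((d:ℝ) * ((d:ℝ)^s)⁻¹ + α ^ (1-s)) * (2:ℝ)^s * Real.Gamma ((d:ℝ)/2 + α/2) := by
      have h1 : Real.Gamma (d/2) * (d:ℝ) ≤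
          2 * (((d:ℝ) + α) ^ (1-s) / (2:ℝ) ^ (1-s)) * Real.Gamma ((d:ℝ)/2 + α/2) := by
        rw [← exs2]; nlinarith [hW2]
      have h2s' : (2:ℝ)^s = 2 / 2^(1-s) := by
        rw [eq_div_iff h21s.ne']; linarith [h2e]
      have h2 : 2 * (((d:ℝ) + α) ^ (1-s) / (2:ℝ) ^ (1-s)) = ((d:ℝ) + α) ^ (1-s) * (2:ℝ)^s := by
        rw [h2s']; ring
      rw [h2] at h1
      calc Real.Gamma (d/2) * (d:ℝ) ≤ ((d:ℝ) + α) ^ (1-s) * (2:ℝ)^s *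
            Real.Gamma ((d:ℝ)/2 + α/2) := h1
        _ ≤ ((d:ℝ) ^ (1-s) + α ^ (1-s)) * (2:ℝ)^s * Real.Gamma ((d:ℝ)/2 + α/2) := by
            have := mul_le_mul_of_nonneg_right hsub h2s.le
            exact mul_le_mul_of_nonneg_right this hΓxs.le
        _ = ((d:ℝ) * ((d:ℝ)^s)⁻¹ + α ^ (1-s)) * (2:ℝ)^s * Real.Gamma ((d:ℝ)/2 + α/2) := by
            rw [ed1s]
    rw [ens, end', e2α, Real.rpow_neg_one, div_le_iff₀ hpos]
    have rhs_eq : (((2:ℝ)^s)⁻¹ / Real.Gamma (1+α/2) * ((d:ℝ)^s)⁻¹ +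
        ((2:ℝ)^s)⁻¹ * α ^ (1 - α/2) / Real.Gamma (1+α/2) * ((d:ℝ))⁻¹) *
        (2^s * 2^s * Real.Gamma (1+α/2) * Real.Gamma ((d:ℝ)/2 + α/2)) =
        (((d:ℝ) * ((d:ℝ)^s)⁻¹ + α ^ (1-s)) * (2:ℝ)^s * Real.Gamma ((d:ℝ)/2 + α/2)) *
          (d:ℝ)⁻¹ := by
      have : (1 : ℝ) - α/2 = 1 - s := by rw [hs_def]
      rw [this]
      field_simp
    rw [rhs_eq, ← div_eq_mul_inv, le_div_iff₀ hdpos]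
    exact key
end
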